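/- Let G = (A, Ω) be a Müller game and let X ⊆ V be such that A(X) is a subarena and X ∉ Ω. Then Player 1 fully wins G(X) if and only if for every Y ⊊ X such that A(Y) is a subarena that is a 1-trap in G(X), Player 1 fully wins G(Y). -/

import Mathlib

open Set

/-- An arena: a finite directed bipartite graph where every vertex has an
outgoing edge.  The vertex set is `V0 ∪ V1` inside the finite type `α`. -/
structure Arena (α : Type) [Fintype α] where
  V0 : Set α
  V1 : Set α
  E : Set (α × α)
  disj : Disjoint V0 V1
  bipartite : E ⊆ (V0 ×ˢ V1) ∪ (V1 ×ˢ V0)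
  succ : ∀ v ∈ V0 ∪ V1, ∃ u, (v, u) ∈ E

variable {α : Type} [Fintype α]

/-- The set of positions of the arena. -/
def Arena.V (A : Arena α) : Set α := A.V0 ∪ A.V1

/-- The positions of Player σ (σ ∈ {0,1}). -/
def Arena.P (A : Arena α) (σ : Fin 2) : Set α := if σ = 0 then A.V0 else A.V1

/-- `A(X)` is a subarena: `X ⊆ V` and every vertex of `X` has an
outgoing edge inside `X`. -/
def Subarena (A : Arena α) (X : Set α) : Prop :=
  X ⊆ A.V ∧ ∀ v ∈ X, ∃ u ∈ X, (v, u) ∈ A.E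

/-- `A(Y)` is a σ-trap of the pseudo-arena `A(X)`: every vertex of
`Y ∩ V_{1-σ}` has an `E`-successor in `Y`, and every vertex of `Y ∩ V_σ`
has all of its `E`-successors inside `X` lying in `Y`.
A σ-trap of `A` itself is `TrapIn A A.V σ Y`. -/
def TrapIn (A : Arena α) (X : Set α) (σ : Fin 2) (Y : Set α) : Prop :=
  Y ⊆ X ∧
  (∀ v ∈ Y ∩ A.P (1 - σ), ∃ u ∈ Y, (v, u) ∈ A.E) ∧
  (∀ v ∈ Y ∩ A.P σ, ∀ u, (v, u) ∈ A.E → u ∈ X → u ∈ Y)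

/-- A play of the (pseudo-)arena `A(X)`: an infinite `E`-path staying in `X`. -/
def IsPlayIn (A : Arena α) (X : Set α) (ρ : ℕ → α) : Prop :=
  ∀ i, ρ i ∈ X ∧ (ρ i, ρ (i + 1)) ∈ A.E

/-- The set of vertices occurring infinitely often in the play `ρ`. -/
def InfOcc (ρ : ℕ → α) : Set α := {v | {i | ρ i = v}.Infinite}

/-- A strategy for Player σ in the game played on the pseudo-arena `A(X)`:
it maps a history (the finite prefix before the current vertex) and the
current vertex of `V_σ ∩ X` to an `E`-successor inside `X`. -/
structure StrategyIn (A : Arena α) (X : Set α) (σ : Fin 2) where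
  move : List α → α → α
  legal : ∀ h v, v ∈ X ∩ A.P σ → (v, move h v) ∈ A.E ∧ move h v ∈ X

/-- A play is consistent with a strategy for Player σ if every move from a
vertex of `V_σ` follows the strategy. -/
def ConsistentIn {A : Arena α} {X : Set α} {σ : Fin 2} (s : StrategyIn A X σ)
    (ρ : ℕ → α) : Prop :=
  ∀ i, ρ i ∈ A.P σ → ρ (i + 1) = s.move (List.ofFn fun j : Fin i => ρ j) (ρ i)

/-- Player σ wins the game on `A(X)` (with payoff `payoff` describing the
plays won by Player 0) from position `v`. -/
def WinsFrom (A : Arena α) (X : Set α) (payoff : (ℕ → α) → Prop) (σ : Fin 2)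
    (v : α) : Prop :=
  ∃ s : StrategyIn A X σ, ∀ ρ, IsPlayIn A X ρ → ρ 0 = v → ConsistentIn s ρ →
    (if σ = 0 then payoff ρ else ¬ payoff ρ)

/-- `Win_σ` of the game on `A(X)`. -/
def WinSet (A : Arena α) (X : Set α) (payoff : (ℕ → α) → Prop) (σ : Fin 2) :
    Set α :=
  {v ∈ X | WinsFrom A X payoff σ v}

/-- Player σ fully wins the game on `A(X)`. -/
def FullyWins (A : Arena α) (X : Set α) (payoff : (ℕ → α) → Prop)
    (σ : Fin 2) : Prop :=
  ∀ v ∈ X, WinsFrom A X payoff σ v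

/-- The attractor `Attr_σ(T, A(X))`: the least `W ⊇ T` containing every
`u ∈ X ∩ V_σ` with some `E`-successor in `W ∩ X` and every
`u ∈ X ∩ V_{1-σ}` all of whose `E`-successors inside `X` lie in `W`. -/
def AttrIn (A : Arena α) (X : Set α) (σ : Fin 2) (T : Set α) : Set α :=
  ⋂₀ {W | T ⊆ W ∧
    (∀ u ∈ X ∩ A.P σ, (∃ w ∈ W ∩ X, (u, w) ∈ A.E) → u ∈ W) ∧
    (∀ u ∈ X ∩ A.P (1 - σ), (∀ w, (u, w) ∈ A.E → w ∈ X → w ∈ W) → u ∈ W)}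

/-- The Müller winning condition: Player 0 wins the play `ρ` iff `Inf(ρ) ∈ Ω`. -/
def MullerPayoff (Ω : Set (Set α)) : (ℕ → α) → Prop := fun ρ => InfOcc ρ ∈ Ω

namespace Stmt4Aux

attribute [local instance] Classical.propDecidable

variable {α : Type} [Fintype α]

lemma P1_eq (A : Arena α) : A.P 1 = A.V1 := if_neg (by decide)
lemma P0_eq (A : Arena α) : A.P 0 = A.V0 := if_pos rfl
lemma Psub_eq (A : Arena α) : A.P (1 - 1) = A.V0 := by
  have : (1 - 1 : Fin 2) = 0 := by decide
  rw [this, P0_eq]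

lemma mem_P_cases (A : Arena α) {X : Set α} (hX : Subarena A X) {v : α} (hv : v ∈ X) :
    v ∈ A.P 0 ∨ v ∈ A.P 1 := by
  rcases hX.1 hv with h | h
  · exact Or.inl (by rwa [P0_eq])
  · exact Or.inr (by rwa [P1_eq])

lemma not_P0_P1 (A : Arena α) {v : α} (h0 : v ∈ A.P 0) (h1 : v ∈ A.P 1) : False := by
  rw [P0_eq] at h0; rw [P1_eq] at h1
  exact Set.disjoint_left.1 A.disj h0 h1

noncomputable section

variable (A : Arena α) (X : Set α)

/-- Iterated attractor of Player 1 towards `{x}` inside `X`. -/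
def attrN (x : α) : ℕ → Set α
  | 0 => {x}
  | k+1 => attrN x k ∪ {u | u ∈ X ∩ A.P 1 ∧ ∃ w, w ∈ attrN x k ∧ w ∈ X ∧ (u, w) ∈ A.E}
      ∪ {u | u ∈ X ∩ A.P 0 ∧ ∀ w, (u, w) ∈ A.E → w ∈ X → w ∈ attrN x k}

def attrU (x : α) : Set α := ⋃ k, attrN A X x k

def Yset (x : α) : Set α := X \ attrU A X x

variable {A X}

lemma Yset_subset {x : α} : Yset A X x ⊆ X := fun _ h => h.1

lemma attrN_le_succ {x : α} (k : ℕ) : attrN A X x k ⊆ attrN A X x (k+1) := by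
  intro v hv; exact Or.inl (Or.inl hv)

lemma attrN_mono {x : α} {k l : ℕ} (h : k ≤ l) : attrN A X x k ⊆ attrN A X x l := by
  induction l with
  | zero => have : k = 0 := Nat.le_zero.1 h; rw [this]
  | succ l ih =>
    rcases Nat.lt_or_ge k (l+1) with h' | h'
    · exact (ih (Nat.lt_succ_iff.1 h')).trans (attrN_le_succ l)
    · have : k = l + 1 := le_antisymm h h'
      rw [this]

lemma attrN_subset_attrU {x : α} (k : ℕ) : attrN A X x k ⊆ attrU A X x :=
  Set.subset_iUnion (attrN A X x) k

lemma x_mem_attrU {x : α} : x ∈ attrU A X x :=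
  attrN_subset_attrU 0 rfl

lemma attrN_subset_X {x : α} (hx : x ∈ X) : ∀ k, attrN A X x k ⊆ X := by
  intro k
  induction k with
  | zero => intro v hv; rw [show v = x from hv]; exact hx
  | succ k ih =>
    rintro v ((hv | hv) | hv)
    · exact ih hv
    · exact hv.1.1
    · exact hv.1.1

lemma attrU_subset_X {x : α} (hx : x ∈ X) : attrU A X x ⊆ X := by
  intro v hv
  rcases Set.mem_iUnion.1 hv with ⟨k, hk⟩
  exact attrN_subset_X hx k hk

variable (A X) in
def rk (x v : α) : ℕ := if h : ∃ k, v ∈ attrN A X x k then Nat.find h else 0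

lemma mem_attrN_rk {x v : α} (hv : v ∈ attrU A X x) : v ∈ attrN A X x (rk A X x v) := by
  rcases Set.mem_iUnion.1 hv with ⟨k, hk⟩
  have h : ∃ k, v ∈ attrN A X x k := ⟨k, hk⟩
  rw [rk, dif_pos h]
  exact Nat.find_spec h

lemma rk_le {x v : α} {k : ℕ} (h : v ∈ attrN A X x k) : rk A X x v ≤ k := by
  have h' : ∃ k, v ∈ attrN A X x k := ⟨k, h⟩
  rw [rk, dif_pos h']
  exact Nat.find_le h

lemma eq_of_rk_zero {x v : α} (hv : v ∈ attrU A X x) (h : rk A X x v = 0) : v = x := by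
  have := mem_attrN_rk hv
  rw [h] at this
  exact this

lemma attr_step_P0 {x v : α} (hv : v ∈ attrU A X x) (hne : v ≠ x) (hP : v ∈ A.P 0) :
    ∀ w, (v, w) ∈ A.E → w ∈ X → w ∈ attrU A X x ∧ rk A X x w < rk A X x v := by
  have hm := mem_attrN_rk hv
  rcases hr : rk A X x v with _ | k
  · exact absurd (eq_of_rk_zero hv hr) hne
  · rw [hr] at hm
    have hnot : v ∉ attrN A X x k := fun h => by
      have := rk_le h; omega
    rcases hm with (hm | hm) | hm
    · exact absurd hm hnot
    · exact absurd hm.1.2 (fun h => not_P0_P1 A hP h)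
    · intro w he hw
      have hwk := hm.2 w he hw
      exact ⟨attrN_subset_attrU k hwk, by have := rk_le hwk; omega⟩

lemma attr_step_P1 {x v : α} (hv : v ∈ attrU A X x) (hne : v ≠ x) (hP : v ∈ A.P 1) :
    ∃ w, (v, w) ∈ A.E ∧ w ∈ X ∧ w ∈ attrU A X x ∧ rk A X x w < rk A X x v := by
  have hm := mem_attrN_rk hv
  rcases hr : rk A X x v with _ | k
  · exact absurd (eq_of_rk_zero hv hr) hne
  · rw [hr] at hm
    have hnot : v ∉ attrN A X x k := fun h => by
      have := rk_le h; omega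
    rcases hm with (hm | hm) | hm
    · exact absurd hm hnot
    · obtain ⟨w, hwk, hwX, he⟩ := hm.2
      exact ⟨w, he, hwX, attrN_subset_attrU k hwk, by have := rk_le hwk; omega⟩
    · exact absurd hm.1.2 (fun h => not_P0_P1 A h hP)

lemma attrU_closed_P0 {x v : α} (hv : v ∈ X ∩ A.P 0)
    (hall : ∀ w, (v, w) ∈ A.E → w ∈ X → w ∈ attrU A X x) : v ∈ attrU A X x := by
  classical
  set s : Set α := {w | (v, w) ∈ A.E ∧ w ∈ X} with hs
  have hfin : s.Finite := Set.toFinite s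
  set K : ℕ := hfin.toFinset.sup (rk A X x) with hK
  have hsub : ∀ w ∈ s, w ∈ attrN A X x K := by
    intro w hw
    have hwU : w ∈ attrU A X x := hall w hw.1 hw.2
    have h1 : w ∈ attrN A X x (rk A X x w) := mem_attrN_rk hwU
    have h2 : rk A X x w ≤ K := Finset.le_sup (hfin.mem_toFinset.2 hw)
    exact attrN_mono h2 h1
  have : v ∈ attrN A X x (K+1) := by
    refine Or.inr ⟨hv, ?_⟩
    intro w he hw
    exact hsub w ⟨he, hw⟩
  exact attrN_subset_attrU (K+1) this

lemma attrU_closed_P1 {x v w : α} (hv : v ∈ X ∩ A.P 1) (he : (v, w) ∈ A.E)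
    (hwX : w ∈ X) (hwU : w ∈ attrU A X x) : v ∈ attrU A X x := by
  rcases Set.mem_iUnion.1 hwU with ⟨k, hk⟩
  exact attrN_subset_attrU (k+1) (Or.inl (Or.inr ⟨hv, w, hk, hwX, he⟩))

lemma Yset_trap {x : α} (hx : x ∈ X) : TrapIn A X 1 (Yset A X x) := by
  refine ⟨Yset_subset, ?_, ?_⟩
  · intro v hv
    rw [Psub_eq] at hv
    have hvP0 : v ∈ A.P 0 := by rw [P0_eq]; exact hv.2
    by_contra hc
    push_neg at hc
    have : v ∈ attrU A X x := by
      apply attrU_closed_P0 (x := x) ⟨hv.1.1, hvP0⟩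
      intro w he hw
      by_contra hw'
      exact hc w ⟨hw, hw'⟩ he
    exact hv.1.2 this
  · intro v hv u he hu
    refine ⟨hu, fun huU => ?_⟩
    have : v ∈ attrU A X x := attrU_closed_P1 ⟨hv.1.1, hv.2⟩ he hu huU
    exact hv.1.2 this

lemma Yset_subarena {x : α} (hX : Subarena A X) (hx : x ∈ X) : Subarena A (Yset A X x) := by
  have htrap := Yset_trap (A := A) (X := X) (x := x) hx
  refine ⟨Yset_subset.trans hX.1, ?_⟩
  intro v hv
  rcases mem_P_cases A hX (Yset_subset hv) with h0 | h1
  · have := htrap.2.1 v ⟨hv, by rwa [Psub_eq, ← P0_eq A]⟩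
    obtain ⟨u, hu, he⟩ := this
    exact ⟨u, hu, he⟩
  · obtain ⟨u, huX, he⟩ := hX.2 v (Yset_subset hv)
    exact ⟨u, htrap.2.2 v ⟨hv, h1⟩ u he huX, he⟩

lemma Yset_ssubset {x : α} (hx : x ∈ X) : Yset A X x ⊂ X := by
  refine ⟨Yset_subset, fun h => ?_⟩
  have : x ∈ Yset A X x := h hx
  exact this.2 x_mem_attrU

end

noncomputable section

variable (A : Arena α) (X : Set α)

/-- A default legal move. -/
def defMove (v : α) : α :=
  if h : ∃ w, w ∈ X ∧ (v, w) ∈ A.E then h.choose else v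

lemma defMove_legal (hX : Subarena A X) {v : α} (hv : v ∈ X) :
    (v, defMove A X v) ∈ A.E ∧ defMove A X v ∈ X := by
  obtain ⟨u, hu, he⟩ := hX.2 v hv
  have h : ∃ w, w ∈ X ∧ (v, w) ∈ A.E := ⟨u, hu, he⟩
  rw [defMove, dif_pos h]
  exact ⟨h.choose_spec.2, h.choose_spec.1⟩

/-- The attracting move towards `x`. -/
def attrMove (x v : α) : α :=
  if h : ∃ w, (v, w) ∈ A.E ∧ w ∈ X ∧ w ∈ attrU A X x ∧ rk A X x w < rk A X x v
  then h.choose else defMove A X v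

lemma attrMove_legal (hX : Subarena A X) {x v : α} (hv : v ∈ X) :
    (v, attrMove A X x v) ∈ A.E ∧ attrMove A X x v ∈ X := by
  rw [attrMove]
  split
  · next h => exact ⟨h.choose_spec.1, h.choose_spec.2.1⟩
  · exact defMove_legal A X hX hv

lemma attrMove_spec {x v : α}
    (h : ∃ w, (v, w) ∈ A.E ∧ w ∈ X ∧ w ∈ attrU A X x ∧ rk A X x w < rk A X x v) :
    (v, attrMove A X x v) ∈ A.E ∧ attrMove A X x v ∈ X ∧
      attrMove A X x v ∈ attrU A X x ∧ rk A X x (attrMove A X x v) < rk A X x v := by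
  rw [attrMove, dif_pos h]
  exact h.choose_spec

end

/-- Cyclic enumeration of the targets. -/
noncomputable def tgt (L : List α) (hL : L ≠ []) (k : ℕ) : α :=
  L.get ⟨k % L.length, Nat.mod_lt _ (List.length_pos_iff_ne_nil.mpr hL)⟩

lemma tgt_mem {L : List α} (hL : L ≠ []) (k : ℕ) : tgt L hL k ∈ L :=
  List.get_mem _ _

lemma tgt_hits {L : List α} (hL : L ≠ []) {x : α} (hx : x ∈ L) (N : ℕ) :
    ∃ k, N ≤ k ∧ tgt L hL k = x := by
  obtain ⟨i, hi⟩ := List.mem_iff_get.1 hx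
  refine ⟨(i : ℕ) + L.length * (N + 1), ?_, ?_⟩
  · have hlen : 1 ≤ L.length := List.length_pos_iff_ne_nil.mpr hL
    calc N ≤ L.length * (N + 1) := by nlinarith
    _ ≤ (i : ℕ) + L.length * (N + 1) := Nat.le_add_left _ _
  · have hmod : ((i : ℕ) + L.length * (N + 1)) % L.length = (i : ℕ) := by
      rw [Nat.add_mul_mod_self_left, Nat.mod_eq_of_lt i.isLt]
    rw [tgt]
    have : (⟨((i : ℕ) + L.length * (N + 1)) % L.length,
        Nat.mod_lt _ (List.length_pos_iff_ne_nil.mpr hL)⟩ : Fin L.length) = i := Fin.ext hmod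
    rw [this, hi]

noncomputable section

variable (A : Arena α) (X : Set α)

/-- The state of the combined strategy: target counter and optional
(entry point, history) of the current sojourn in a trap. -/
def step (L : List α) (hL : L ≠ []) (S : ℕ × Option (α × List α)) (u : α) :
    ℕ × Option (α × List α) :=
  let t1 := if u = tgt L hL S.1 then S.1 + 1 else S.1
  let m0 : Option (α × List α) := if u = tgt L hL S.1 then none else S.2
  (t1, if u ∈ Yset A X (tgt L hL t1) then
         some (m0.elim (u, [u]) fun p => (p.1, p.2 ++ [u]))
       else none)

variable {A X} in
lemma step_fst {L : List α} {hL : L ≠ []} (S : ℕ × Option (α × List α)) (u : α) :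
    (step A X L hL S u).1 = if u = tgt L hL S.1 then S.1 + 1 else S.1 := rfl

variable {A X} in
lemma step_fst_cases {L : List α} {hL : L ≠ []} (S : ℕ × Option (α × List α)) (u : α) :
    (step A X L hL S u).1 = S.1 ∨ (step A X L hL S u).1 = S.1 + 1 := by
  rw [step_fst]; split
  · exact Or.inr rfl
  · exact Or.inl rfl

variable {A X} in
lemma step_snd_some {L : List α} {hL : L ≠ []} {S : ℕ × Option (α × List α)} {u e : α}
    {hist : List α} (h : (step A X L hL S u).2 = some (e, hist)) :
    u ∈ Yset A X (tgt L hL (step A X L hL S u).1) := by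
  by_cases hm : u ∈ Yset A X (tgt L hL (step A X L hL S u).1)
  · exact hm
  · exfalso
    have : (step A X L hL S u).2 = none := by
      simp only [step] at hm ⊢
      rw [if_neg hm]
    rw [this] at h
    cases h

variable {A X} in
lemma step_snd {L : List α} {hL : L ≠ []} (S : ℕ × Option (α × List α)) (u : α) :
    (step A X L hL S u).2 =
      if u ∈ Yset A X (tgt L hL (step A X L hL S u).1) then
        some ((if u = tgt L hL S.1 then none else S.2).elim (u, [u])
          fun p => (p.1, p.2 ++ [u]))
      else none := rfl

def postMove (sub : ∀ x e, x ∈ X → e ∈ Yset A X x → StrategyIn A (Yset A X x) 1)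
    (L : List α) (hL : L ≠ []) (W : ℕ × Option (α × List α)) (v : α) : α :=
  W.2.elim (attrMove A X (tgt L hL W.1) v) fun p =>
    if hc : tgt L hL W.1 ∈ X ∧ p.1 ∈ Yset A X (tgt L hL W.1) then
      (sub _ _ hc.1 hc.2).move p.2.dropLast v
    else defMove A X v

variable {A X} in
lemma postMove_none {sub} {L : List α} {hL : L ≠ []} {W} (v : α) (h : W.2 = none) :
    postMove A X sub L hL W v = attrMove A X (tgt L hL W.1) v := by
  simp only [postMove, h, Option.elim]

variable {A X} in
lemma postMove_some {sub} {L : List α} {hL : L ≠ []} {W} (v : α) {e : α} {hist : List α}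
    (h : W.2 = some (e, hist)) :
    postMove A X sub L hL W v =
      if hc : tgt L hL W.1 ∈ X ∧ e ∈ Yset A X (tgt L hL W.1) then
        (sub _ _ hc.1 hc.2).move hist.dropLast v
      else defMove A X v := by
  simp only [postMove, h, Option.elim]

def comboMove (sub : ∀ x e, x ∈ X → e ∈ Yset A X x → StrategyIn A (Yset A X x) 1)
    (L : List α) (hL : L ≠ []) (h : List α) (v : α) : α :=
  postMove A X sub L hL (step A X L hL (h.foldl (step A X L hL) (0, none)) v) v

def comboStrat (hX : Subarena A X)
    (sub : ∀ x e, x ∈ X → e ∈ Yset A X x → StrategyIn A (Yset A X x) 1)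
    (L : List α) (hL : L ≠ []) : StrategyIn A X 1 where
  move := comboMove A X sub L hL
  legal := by
    intro h v hv
    set S' := step A X L hL (h.foldl (step A X L hL) (0, none)) v with hS'
    have hunf : comboMove A X sub L hL h v = postMove A X sub L hL S' v := rfl
    rcases hm : S'.2 with _ | ⟨e, hist⟩
    · rw [hunf, postMove_none v hm]
      exact attrMove_legal A X hX hv.1
    · rw [hunf, postMove_some v hm]
      split
      · next hc =>
        have hvY : v ∈ Yset A X (tgt L hL S'.1) := step_snd_some (hS' ▸ hm)
        have := (sub _ _ hc.1 hc.2).legal hist.dropLast v ⟨hvY, hv.2⟩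
        exact ⟨this.1, Yset_subset this.2⟩
      · exact defMove_legal A X hX hv.1

end
lemma infinite_iff_unbdd {s : Set ℕ} : s.Infinite ↔ ∀ N, ∃ i, N ≤ i ∧ i ∈ s := by
  constructor
  · intro h N
    by_contra hc
    push_neg at hc
    exact h (Set.Finite.subset (Set.finite_Iio N)
      (fun i hi => lt_of_not_ge (fun hN => hc i hN hi)))
  · intro h hf
    obtain ⟨b, hb⟩ := hf.bddAbove
    obtain ⟨i, hi, his⟩ := h (b + 1)
    exact absurd (hb his) (by omega)

lemma infOcc_shift {β : Type} (ρ : ℕ → β) (j : ℕ) : InfOcc (fun k => ρ (j + k)) = InfOcc ρ := by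
  ext v
  simp only [InfOcc, Set.mem_setOf_eq, infinite_iff_unbdd]
  constructor
  · intro h N
    obtain ⟨k, hk, hkv⟩ := h N
    exact ⟨j + k, by omega, hkv⟩
  · intro h N
    obtain ⟨i, hi, hiv⟩ := h (N + j)
    refine ⟨i - j, by omega, ?_⟩
    show ρ (j + (i - j)) = v
    rwa [show j + (i - j) = i by omega]

lemma incr_hit (t : ℕ → ℕ) (h0 : t 0 = 0) (hst : ∀ i, t (i+1) = t i ∨ t (i+1) = t i + 1)
    (k : ℕ) (hub : ∃ i, k + 1 ≤ t i) : ∃ i, t i = k ∧ t (i + 1) = k + 1 := by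
  have hkey : ∃ i, k + 1 ≤ t i := hub
  set i0 := Nat.find hkey with hi0
  have hspec : k + 1 ≤ t i0 := Nat.find_spec hkey
  have hne : i0 ≠ 0 := by
    intro h
    rw [h, h0] at hspec; omega
  obtain ⟨j, hj⟩ : ∃ j, i0 = j + 1 := ⟨i0 - 1, by omega⟩
  have hmin : ¬ (k + 1 ≤ t j) := Nat.find_min hkey (by omega)
  rcases hst j with h | h
  · rw [hj, h] at hspec; omega
  · rw [hj] at hspec
    exact ⟨j, by omega, by omega⟩

lemma mono_of_steps (t : ℕ → ℕ) (hst : ∀ i, t (i+1) = t i ∨ t (i+1) = t i + 1) :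
    Monotone t :=
  monotone_nat_of_le_succ (fun i => by rcases hst i with h | h <;> omega)

lemma mono_bdd_const (t : ℕ → ℕ) (hst : ∀ i, t (i+1) = t i ∨ t (i+1) = t i + 1)
    (hb : ¬ ∀ k, ∃ i, k ≤ t i) : ∃ N, ∀ i, N ≤ i → t i = t N := by
  by_contra h
  push_neg at h
  apply hb
  intro k
  induction k with
  | zero => exact ⟨0, Nat.zero_le _⟩
  | succ k ih =>
    obtain ⟨i, hi⟩ := ih
    obtain ⟨i', hii', hne⟩ := h i
    have := mono_of_steps t hst hii'
    exact ⟨i', by omega⟩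

lemma ofFn_snoc {β : Type} (f : ℕ → β) (k : ℕ) :
    (List.ofFn fun m : Fin (k+1) => f m) = (List.ofFn fun m : Fin k => f m) ++ [f k] := by
  rw [List.ofFn_succ']
  simp [List.concat_eq_append]
lemma forward (A : Arena α) (X : Set α) (Ω : Set (Set α))
    (h : FullyWins A X (MullerPayoff Ω) 1) :
    ∀ Y, Y ⊂ X → Subarena A Y → TrapIn A X 1 Y → FullyWins A Y (MullerPayoff Ω) 1 := by
  intro Y _ _ hYtrap v hv
  obtain ⟨s, hs⟩ := h v (hYtrap.1 hv)
  refine ⟨⟨s.move, ?_⟩, ?_⟩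
  · intro h' w hw
    have hw' : w ∈ X ∩ A.P 1 := ⟨hYtrap.1 hw.1, hw.2⟩
    obtain ⟨he, hm⟩ := s.legal h' w hw'
    exact ⟨he, hYtrap.2.2 w hw _ he hm⟩
  · intro ρ hρ h0 hcons
    have hplayX : IsPlayIn A X ρ := fun i => ⟨hYtrap.1 (hρ i).1, (hρ i).2⟩
    exact hs ρ hplayX h0 hcons

theorem reverse (A : Arena α) (X : Set α) (Ω : Set (Set α)) (hX : Subarena A X)
    (hmem : X ∉ Ω) (hne : X.Nonempty)
    (H : ∀ Y, Y ⊂ X → Subarena A Y → TrapIn A X 1 Y → FullyWins A Y (MullerPayoff Ω) 1) :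
    FullyWins A X (MullerPayoff Ω) 1 := by
  classical
  -- the enumeration list of X
  set L : List α := X.toFinite.toFinset.toList with hLdef
  have hL : L ≠ [] := by
    intro h
    rw [hLdef, Finset.toList_eq_nil, Set.Finite.toFinset_eq_empty] at h
    exact hne.ne_empty h
  have hLX : ∀ a ∈ L, a ∈ X := by
    intro a ha
    rw [hLdef, Finset.mem_toList, Set.Finite.mem_toFinset] at ha
    exact ha
  have hXL : ∀ a ∈ X, a ∈ L := by
    intro a ha
    rw [hLdef, Finset.mem_toList, Set.Finite.mem_toFinset]
    exact ha
  -- the sub-strategies in the traps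
  let sub : ∀ x e, x ∈ X → e ∈ Yset A X x → StrategyIn A (Yset A X x) 1 :=
    fun x e hx he =>
      (H (Yset A X x) (Yset_ssubset hx) (Yset_subarena hX hx) (Yset_trap hx) e he).choose
  have subspec : ∀ x e (hx : x ∈ X) (he : e ∈ Yset A X x), ∀ ρ',
      IsPlayIn A (Yset A X x) ρ' → ρ' 0 = e → ConsistentIn (sub x e hx he) ρ' →
      ¬ MullerPayoff Ω ρ' := by
    intro x e hx he ρ' h1 h2 h3
    have := (H (Yset A X x) (Yset_ssubset hx) (Yset_subarena hX hx)
      (Yset_trap hx) e he).choose_spec ρ' h1 h2 h3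
    rwa [if_neg (show ¬ ((1 : Fin 2) = 0) by decide)] at this
  intro v hv
  refine ⟨comboStrat A X hX sub L hL, ?_⟩
  intro ρ hplay _ hcons
  rw [if_neg (show ¬ ((1 : Fin 2) = 0) by decide)]
  intro hpay
  -- the state sequence
  let S : ℕ → ℕ × Option (α × List α) :=
    fun i => Nat.rec (0, none) (fun i acc => step A X L hL acc (ρ i)) i
  have hSsucc : ∀ i, S (i + 1) = step A X L hL (S i) (ρ i) := fun _ => rfl
  have hfold : ∀ i, (List.ofFn fun j : Fin i => ρ j).foldl (step A X L hL) (0, none) = S i := by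
    intro i
    induction i with
    | zero => simp [S]
    | succ i ih =>
      rw [ofFn_snoc ρ i, List.foldl_append, ih]
      simp [hSsucc]
  let t : ℕ → ℕ := fun i => (S i).1
  have ht0 : t 0 = 0 := rfl
  have htst : ∀ i, t (i + 1) = t i ∨ t (i + 1) = t i + 1 := fun i =>
    step_fst_cases (S i) (ρ i)
  have hmono := mono_of_steps t htst
  have htgtX : ∀ k, tgt L hL k ∈ X := fun k => hLX _ (tgt_mem hL k)
  -- the moves of the play at Player 1 positions
  have hmove : ∀ i, ρ i ∈ A.P 1 → ρ (i + 1) = postMove A X sub L hL (S (i + 1)) (ρ i) := by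
    intro i hP
    rw [hcons i hP]
    show postMove A X sub L hL
      (step A X L hL ((List.ofFn fun j : Fin i => ρ j).foldl (step A X L hL) (0, none)) (ρ i))
      (ρ i) = _
    rw [hfold i]
  by_cases hub : ∀ k, ∃ i, k ≤ t i
  · -- Case A : the target counter is unbounded, every vertex is visited infinitely often
    have hvisit : ∀ x ∈ X, ∀ N, ∃ i, N ≤ i ∧ ρ i = x := by
      intro x hx N
      obtain ⟨k, hkN, hk⟩ := tgt_hits hL (hXL x hx) (t N + 1)
      obtain ⟨i, hti, hti1⟩ := incr_hit t ht0 htst k (hub (k + 1))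
      have hρi : ρ i = tgt L hL (t i) := by
        by_contra hc
        have : t (i + 1) = t i := by
          show (step A X L hL (S i) (ρ i)).1 = t i
          rw [step_fst, if_neg hc]
        omega
      have hρx : ρ i = x := by rw [hρi, hti, hk]
      have hiN : N ≤ i := by
        by_contra hc
        have := hmono (le_of_lt (not_le.1 hc))
        omega
      exact ⟨i, hiN, hρx⟩
    have hInf : InfOcc ρ = X := by
      ext y
      constructor
      · intro hy
        obtain ⟨i, _, hi⟩ := infinite_iff_unbdd.1 hy 0
        rw [← hi]; exact (hplay i).1
      · intro hy
        exact infinite_iff_unbdd.2 fun N => hvisit y hy N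
    exact hmem (hInf ▸ hpay)
  · -- Case B : the target stabilizes
    obtain ⟨N, hNconst⟩ := mono_bdd_const t htst hub
    set T := t N with hTdef
    set x := tgt L hL T with hxdef
    have hx : x ∈ X := htgtX T
    have hTi : ∀ i, N ≤ i → t i = T := hNconst
    have hne_x : ∀ i, N ≤ i → ρ i ≠ x := by
      intro i hi hc
      have h1 : t (i + 1) = t i + 1 := by
        show (step A X L hL (S i) (ρ i)).1 = t i + 1
        rw [step_fst, if_pos]
        show ρ i = tgt L hL (t i)
        rw [hTi i hi, ← hxdef]
        exact hc
      have h2 := hTi i hi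
      have h3 := hTi (i + 1) (by omega)
      omega
    -- after stabilization the play stays out of the attractor
    have hYx : ∀ i, N ≤ i → ρ i ∈ Yset A X x := by
      suffices hsuf : ∀ r, ∀ i, N ≤ i → ρ i ∈ attrU A X x → rk A X x (ρ i) ≤ r → False by
        intro i hi
        exact ⟨(hplay i).1, fun hc => hsuf (rk A X x (ρ i)) i hi hc le_rfl⟩
      intro r
      induction r using Nat.strong_induction_on with
      | _ r ih =>
        intro i hi hU hr
        have hne' := hne_x i hi
        have hrpos : rk A X x (ρ i) ≠ 0 := fun h => hne' (eq_of_rk_zero hU h)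
        have hnext : ρ (i + 1) ∈ attrU A X x ∧ rk A X x (ρ (i + 1)) < rk A X x (ρ i) := by
          rcases mem_P_cases A hX (hplay i).1 with hP0 | hP1
          · exact attr_step_P0 hU hne' hP0 (ρ (i + 1)) (hplay i).2 (hplay (i + 1)).1
          · have hmode : (S (i + 1)).2 = none := by
              show (step A X L hL (S i) (ρ i)).2 = none
              rw [step_snd]
              rw [if_neg]
              have hT1 : (step A X L hL (S i) (ρ i)).1 = T := hTi (i + 1) (by omega)
              rw [hT1, ← hxdef]
              exact fun hY => hY.2 hU
            have hmv := hmove i hP1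
            rw [postMove_none (ρ i) hmode] at hmv
            have hT1 : tgt L hL (t (i + 1)) = x := by rw [hTi (i + 1) (by omega), ← hxdef]
            rw [show (S (i+1)).1 = t (i+1) from rfl, hT1] at hmv
            have hex := attr_step_P1 hU hne' hP1
            have hspec := attrMove_spec A X hex
            rw [← hmv] at hspec
            exact ⟨hspec.2.2.1, hspec.2.2.2⟩
        exact ih (rk A X x (ρ (i + 1))) (lt_of_lt_of_le hnext.2 hr) (i + 1) (by omega)
          hnext.1 le_rfl
    -- after stabilization the strategy is in trap mode
    have hmode_some : ∀ i, N ≤ i → ∃ e hist, (S (i + 1)).2 = some (e, hist) := by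
      intro i hi
      have hT1 : (step A X L hL (S i) (ρ i)).1 = T := hTi (i + 1) (by omega)
      have h1 : (S (i + 1)).2 =
          some ((if ρ i = tgt L hL (S i).1 then none else (S i).2).elim (ρ i, [ρ i])
            fun p => (p.1, p.2 ++ [ρ i])) := by
        show (step A X L hL (S i) (ρ i)).2 = _
        rw [step_snd, hT1, ← hxdef, if_pos (hYx i hi)]
      exact ⟨_, _, by rw [h1]⟩
    -- the structural invariant of the strategy state
    have hInv : ∀ i e hist, (S i).2 = some (e, hist) →
        ∃ j k, j + k = i ∧ 0 < k ∧ e = ρ j ∧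
          hist = List.ofFn (fun m : Fin k => ρ (j + m)) ∧
          (∀ m, j ≤ m → m < i → ρ m ∈ Yset A X (tgt L hL (t i))) ∧
          (∀ m, j < m → m ≤ i → t m = t i) := by
      intro i
      induction i with
      | zero =>
        intro e hist h
        exact absurd h (by rw [show (S 0).2 = none from rfl]; simp)
      | succ i ih =>
        intro e hist h
        have h' : (step A X L hL (S i) (ρ i)).2 = some (e, hist) := h
        rw [step_snd] at h'
        by_cases hin : ρ i ∈ Yset A X (tgt L hL (step A X L hL (S i) (ρ i)).1)
        swap
        · rw [if_neg hin] at h'; exact absurd h' (by simp)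
        rw [if_pos hin] at h'
        have h'' := Option.some.inj h'
        have hin' : ρ i ∈ Yset A X (tgt L hL (t (i + 1))) := hin
        by_cases hρ : ρ i = tgt L hL (S i).1
        · rw [if_pos hρ] at h''
          simp only [Option.elim] at h''
          obtain ⟨he, hh⟩ := Prod.mk.injEq _ _ _ _ ▸ h''
          refine ⟨i, 1, by omega, by omega, he.symm, ?_, ?_, ?_⟩
          · rw [← hh]; simp
          · intro m h1 h2
            have : m = i := by omega
            rw [this]; exact hin'
          · intro m h1 h2
            have : m = i + 1 := by omega
            rw [this]
        · rw [if_neg hρ] at h''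
          have htconst : t (i + 1) = t i := by
            show (step A X L hL (S i) (ρ i)).1 = t i
            rw [step_fst, if_neg hρ]
          rcases hm : (S i).2 with _ | ⟨e₀, h₀⟩
          · rw [hm] at h''
            simp only [Option.elim] at h''
            obtain ⟨he, hh⟩ := Prod.mk.injEq _ _ _ _ ▸ h''
            refine ⟨i, 1, by omega, by omega, he.symm, ?_, ?_, ?_⟩
            · rw [← hh]; simp
            · intro m h1 h2
              have : m = i := by omega
              rw [this]; exact hin'
            · intro m h1 h2
              have : m = i + 1 := by omega
              rw [this]
          · rw [hm] at h''
            simp only [Option.elim] at h''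
            obtain ⟨he, hh⟩ := Prod.mk.injEq _ _ _ _ ▸ h''
            obtain ⟨j, k, hjk, hkpos, he₀, hh₀, hmem, hconst⟩ := ih e₀ h₀ hm
            refine ⟨j, k + 1, by omega, by omega, by rw [← he, he₀], ?_, ?_, ?_⟩
            · rw [← hh, hh₀, ofFn_snoc (fun m => ρ (j + m)) k, hjk]
            · intro m h1 h2
              rcases Nat.lt_or_ge m i with h3 | h3
              · have := hmem m h1 h3
                rwa [htconst]
              · have : m = i := by omega
                rw [this]; exact hin'
            · intro m h1 h2
              rcases Nat.lt_or_ge m (i + 1) with h3 | h3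
              · rw [htconst]; exact hconst m h1 (by omega)
              · have : m = i + 1 := by omega
                rw [this]
    -- a cast lemma for list lengths
    have hcast : ∀ j a b : ℕ, a = b →
        (List.ofFn fun q : Fin a => ρ (j + q)) = List.ofFn fun q : Fin b => ρ (j + q) := by
      intro j a b h'; subst h'; rfl
    -- extract the run
    obtain ⟨e₁, h₁, hstar⟩ := hmode_some N le_rfl
    obtain ⟨j, k0, hjk, hk0pos, he₁, hh₁, hmemrun, htrun⟩ := hInv (N + 1) e₁ h₁ hstar
    have hjN : j ≤ N := by omega
    have hbase : (S (N + 1)).2 =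
        some (ρ j, List.ofFn fun q : Fin (N + 1 - j) => ρ (j + q)) := by
      rw [hstar, he₁, hh₁, hcast j k0 (N + 1 - j) (by omega)]
    -- continuation of the run
    have hcont : ∀ i, N ≤ i → ∀ e hist, (S (i + 1)).2 = some (e, hist) →
        (S (i + 2)).2 = some (e, hist ++ [ρ (i + 1)]) := by
      intro i hi e hist hsome
      show (step A X L hL (S (i + 1)) (ρ (i + 1))).2 = _
      rw [step_snd]
      have hρ : ¬ (ρ (i + 1) = tgt L hL (S (i + 1)).1) := by
        rw [show (S (i + 1)).1 = t (i + 1) from rfl, hTi (i + 1) (by omega), ← hxdef]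
        exact hne_x (i + 1) (by omega)
      have h2 : (step A X L hL (S (i + 1)) (ρ (i + 1))).1 = T := hTi (i + 2) (by omega)
      rw [h2, ← hxdef, if_pos (hYx (i + 1) (by omega)), if_neg hρ, hsome]
      simp [Option.elim]
    -- the whole run history, upwards
    have hup : ∀ i, N ≤ i →
        (S (i + 1)).2 = some (ρ j, List.ofFn fun q : Fin (i + 1 - j) => ρ (j + q)) := by
      intro i hi
      induction i, hi using Nat.le_induction with
      | base => exact hbase
      | succ i hi ih =>
        have := hcont i hi _ _ ih
        rw [this, hcast j (i + 1 + 1 - j) (i + 1 - j + 1) (by omega),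
          ofFn_snoc (fun q => ρ (j + q)) (i + 1 - j),
          show j + (i + 1 - j) = i + 1 by omega]
    -- downward step
    have hdown : ∀ i e hist, (S (i + 1)).2 = some (e, hist) → 2 ≤ hist.length →
        (S i).2 = some (e, hist.dropLast) := by
      intro i e hist h hlen
      have h' : (step A X L hL (S i) (ρ i)).2 = some (e, hist) := h
      rw [step_snd] at h'
      by_cases hin : ρ i ∈ Yset A X (tgt L hL (step A X L hL (S i) (ρ i)).1)
      swap
      · rw [if_neg hin] at h'; exact absurd h' (by simp)
      rw [if_pos hin] at h'
      have h'' := Option.some.inj h'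
      by_cases hρ : ρ i = tgt L hL (S i).1
      · rw [if_pos hρ] at h''
        simp only [Option.elim] at h''
        obtain ⟨_, hh⟩ := Prod.mk.injEq _ _ _ _ ▸ h''
        rw [← hh] at hlen
        simp at hlen
      · rw [if_neg hρ] at h''
        rcases hm : (S i).2 with _ | ⟨e₀, h₀⟩
        · rw [hm] at h''
          simp only [Option.elim] at h''
          obtain ⟨_, hh⟩ := Prod.mk.injEq _ _ _ _ ▸ h''
          rw [← hh] at hlen
          simp at hlen
        · rw [hm] at h''
          simp only [Option.elim] at h''
          obtain ⟨he, hh⟩ := Prod.mk.injEq _ _ _ _ ▸ h''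
          rw [← hh, ← he, List.dropLast_concat]
    -- the whole run history, downwards
    have hdownAll : ∀ d m, j ≤ m → m ≤ N → N - m ≤ d →
        (S (m + 1)).2 = some (ρ j, List.ofFn fun q : Fin (m + 1 - j) => ρ (j + q)) := by
      intro d
      induction d with
      | zero =>
        intro m h1 h2 h3
        have : m = N := by omega
        rw [this]; exact hbase
      | succ d ih =>
        intro m h1 h2 h3
        rcases Nat.lt_or_ge m N with h4 | h4
        · have hnext := ih (m + 1) (by omega) (by omega) (by omega)
          have := hdown (m + 1) _ _ hnext (by
            rw [List.length_ofFn]; omega)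
          rw [this]
          congr 1
          rw [hcast j (m + 1 + 1 - j) (m + 1 - j + 1) (by omega),
            ofFn_snoc (fun q => ρ (j + q)) (m + 1 - j), List.dropLast_concat]
        · have : m = N := by omega
          rw [this]; exact hbase
    have histAll : ∀ m, j ≤ m →
        (S (m + 1)).2 = some (ρ j, List.ofFn fun q : Fin (m + 1 - j) => ρ (j + q)) := by
      intro m hm
      rcases Nat.lt_or_ge m N with h4 | h4
      · exact hdownAll (N - m) m hm (by omega) le_rfl
      · exact hup m h4
    -- all positions from time j on are in the trap
    have memAll : ∀ m, j ≤ m → ρ m ∈ Yset A X x := by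
      intro m hm
      rcases Nat.lt_or_ge m N with h4 | h4
      · have := hmemrun m hm (by omega)
        rwa [show t (N + 1) = T from hTi (N + 1) (by omega), ← hxdef] at this
      · exact hYx m h4
    have tAll : ∀ m, j ≤ m → t (m + 1) = T := by
      intro m hm
      rcases Nat.lt_or_ge (m + 1) (N + 1) with h4 | h4
      · have := htrun (m + 1) (by omega) (by omega)
        rwa [show t (N + 1) = T from hTi (N + 1) (by omega)] at this
      · exact hTi (m + 1) (by omega)
    have hej : ρ j ∈ Yset A X x := memAll j le_rfl
    -- the shifted play
    have hconsist : ConsistentIn (sub x (ρ j) hx hej) (fun q => ρ (j + q)) := by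
      intro q hq
      have hq' : ρ (j + q) ∈ A.P 1 := hq
      have hsm := histAll (j + q) (by omega)
      have hmv := hmove (j + q) hq'
      rw [postMove_some (ρ (j + q)) hsm] at hmv
      rw [show (S (j + q + 1)).1 = t (j + q + 1) from rfl, tAll (j + q) (by omega),
        ← hxdef] at hmv
      rw [dif_pos ⟨hx, hej⟩] at hmv
      have hdrop : (List.ofFn fun q' : Fin (j + q + 1 - j) => ρ (j + q')).dropLast =
          List.ofFn fun q' : Fin q => ρ (j + q') := by
        rw [hcast j (j + q + 1 - j) (q + 1) (by omega), ofFn_snoc (fun q' => ρ (j + q')) q,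
          List.dropLast_concat]
      rw [hdrop] at hmv
      exact hmv
    have hplay' : IsPlayIn A (Yset A X x) (fun q => ρ (j + q)) := by
      intro q
      refine ⟨memAll (j + q) (by omega), ?_⟩
      show (ρ (j + q), ρ (j + q + 1)) ∈ A.E
      exact (hplay (j + q)).2
    have := subspec x (ρ j) hx hej (fun q => ρ (j + q)) hplay' rfl hconsist
    apply this
    show InfOcc (fun q => ρ (j + q)) ∈ Ω
    rw [infOcc_shift ρ j]
    exact hpay

end Stmt4Aux

/-- Corollary 4.6: for a subarena `A(X)` with `X ∉ Ω`, Player 1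
fully wins `G(X)` iff Player 1 fully wins `G(Y)` for every proper subarena
`A(Y)` that is a 1-trap in `G(X)`. -/
theorem stmt4 (A : Arena α) (Ω : Set (Set α)) (X : Set α)
    (hX : Subarena A X) (hmem : X ∉ Ω) :
    FullyWins A X (MullerPayoff Ω) 1 ↔
      ∀ Y, Y ⊂ X → Subarena A Y → TrapIn A X 1 Y →
        FullyWins A Y (MullerPayoff Ω) 1 := by
  constructor
  · exact Stmt4Aux.forward A X Ω
  · intro H
    rcases X.eq_empty_or_nonempty with rfl | hne
    · intro v hv
      exact absurd hv (Set.notMem_empty v)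
    · exact Stmt4Aux.reverse A X Ω hX hmem hne H
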